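/- Let ν be a probability measure on a measurable space X, y₁,…,y_k points of Y, c : X × Y → ℝ a nonnegative measurable cost, and g ∈ ℝ^k with measurable Laguerre cells L_j(g) satisfying ν(⋃_j L_j(g)) = 1. Then the measure γ* = ∑_j (ν restricted to L_j(g)) ⊗ δ_{y_j} on X × Y is a coupling of ν and the discrete measure ∑_j ν(L_j(g)) δ_{y_j}, and its transport cost equals ∫_{X×Y} c dγ* = ∑_j ∫_{L_j(g)} c(x, y_j) dν(x). -/
import Mathlib

open MeasureTheory ENNReal

/-- If the Laguerre cells carry all the mass of `ν`, then
`γ* = ∑ j, (ν restricted to L j) ⊗ δ_{y j}` is a coupling of `ν` and the discrete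
measure `∑ j, ν (L j) • δ_{y j}`, and its transport cost is
`∑ j, ∫_{L j} c (x, y j) dν`. -/
theorem laguerre_coupling_is_coupling_and_cost
    {X Y : Type*} [MeasurableSpace X] [MeasurableSpace Y] {k : ℕ}
    (ν : Measure X) [IsProbabilityMeasure ν]
    (y : Fin k → Y)
    (c : X × Y → ℝ) (hc_meas : Measurable c) (hc_nonneg : ∀ p, 0 ≤ c p)
    (g : Fin k → ℝ)
    (L : Fin k → Set X)
    (hL : ∀ j, L j = {x : X | ∀ m, m ≠ j → c (x, y j) - g j < c (x, y m) - g m})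
    (hL_meas : ∀ j, MeasurableSet (L j))
    (hL_full : ν (⋃ j, L j) = 1)
    (γstar : Measure (X × Y))
    (hγstar : γstar = ∑ j, (ν.restrict (L j)).prod (Measure.dirac (y j))) :
    IsProbabilityMeasure γstar ∧
    γstar.map Prod.fst = ν ∧
    γstar.map Prod.snd = ∑ j, ν (L j) • Measure.dirac (y j) ∧
    ∫⁻ p, ENNReal.ofReal (c p) ∂γstar
      = ∑ j, ∫⁻ x in L j, ENNReal.ofReal (c (x, y j)) ∂ν := by
  have hdisj : Pairwise (Function.onFun Disjoint L) := by
    intro i j hij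
    simp only [Function.onFun]
    rw [Set.disjoint_left]
    intro x hxi hxj
    rw [hL i] at hxi
    rw [hL j] at hxj
    exact absurd (hxi j hij.symm) (not_lt.2 (le_of_lt (hxj i hij)))
  have hγsum : γstar = Measure.sum fun j => (ν.restrict (L j)).prod (Measure.dirac (y j)) := by
    rw [hγstar, Measure.sum_fintype]
  have hsum_restrict : (Measure.sum fun j => ν.restrict (L j)) = ν := by
    rw [← Measure.restrict_iUnion hdisj hL_meas]
    apply Measure.restrict_eq_self_of_ae_mem
    have hcompl : ν (⋃ j, L j)ᶜ = 0 := by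
      have h := measure_add_measure_compl (μ := ν) (MeasurableSet.iUnion hL_meas)
      rw [hL_full, measure_univ] at h
      have h2 : (1:ℝ≥0∞) + ν (⋃ j, L j)ᶜ = 1 + 0 := by rw [h, add_zero]
      exact (ENNReal.add_right_inj one_ne_top).mp h2
    exact hcompl
  have hfst : γstar.map Prod.fst = ν := by
    rw [hγsum, Measure.map_sum measurable_fst.aemeasurable]
    have h1 : ∀ j, ((ν.restrict (L j)).prod (Measure.dirac (y j))).map Prod.fst
        = ν.restrict (L j) := by
      intro j
      rw [Measure.map_fst_prod]
      simp
    simp_rw [h1, hsum_restrict]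
  have hprob : IsProbabilityMeasure γstar := by
    constructor
    have h : γstar Set.univ = (γstar.map Prod.fst) Set.univ := by
      rw [Measure.map_apply measurable_fst MeasurableSet.univ]
      simp
    rw [h, hfst, measure_univ]
  have hsnd : γstar.map Prod.snd = ∑ j, ν (L j) • Measure.dirac (y j) := by
    rw [hγsum, Measure.map_sum measurable_snd.aemeasurable]
    have h1 : ∀ j, ((ν.restrict (L j)).prod (Measure.dirac (y j))).map Prod.snd
        = ν (L j) • Measure.dirac (y j) := by
      intro j
      rw [Measure.map_snd_prod]
      simp [Measure.restrict_apply_univ]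
    simp_rw [h1]
    exact Measure.sum_fintype _
  refine ⟨hprob, hfst, hsnd, ?_⟩
  rw [hγsum, lintegral_sum_measure, tsum_fintype]
  have hmeas : Measurable fun p : X × Y => ENNReal.ofReal (c p) := hc_meas.ennreal_ofReal
  congr 1
  ext j
  rw [lintegral_prod _ hmeas.aemeasurable]
  exact lintegral_congr fun x => lintegral_dirac' _ (hmeas.comp measurable_prodMk_left)
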